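/- If (Γ,γ) is an order-2p crystallization of a closed 3-manifold — i.e. a 4-colored graph with g_{î} = 1 for every i ∈ Δ₃ and χ(K(Γ)) = Σ_{i∈Δ₃} g_{î} − Σ_{{i,j}} g_{ij} + 2p = 0 — then ω_G(Γ) = 3ρ(Γ) if and only if g_{ij} = (p+2)/3 for all distinct i,j ∈ Δ₃. -/

import Mathlib

/-!
Basic framework: edge-colored graphs à la crystallization theory.

A `(d+1)`-colored graph (finite connected multigraph, regular of degree `d+1`, with a proper
edge-coloring by the color set `C`, `#C = d+1`) is encoded by giving, for each color `c`,
the perfect matching formed by the `c`-colored edges, i.e. a fixed-point-free involution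
`inv c` on the vertex set `V` (connectedness is the separate predicate `Conn`).
-/



section Counting
open Function Relation
variable {A B X : Type}

lemma card_add_one_le_of_surj [Finite A] (f : A → B) (hs : Surjective f)
    {x y : A} (hxy : x ≠ y) (hf : f x = f y) : Nat.card B + 1 ≤ Nat.card A := by
  have : Finite B := Finite.of_surjective f hs
  classical
  set s := surjInv hs with hsdef
  have hsi : Injective s := injective_surjInv hs
  have hfs : ∀ b, f (s b) = b := rightInverse_surjInv hs
  set z : A := if s (f x) = x then y else x with hz
  have hzne : ∀ b, s b ≠ z := by
    intro b hb
    have hbfx : b = f x := by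
      have : f (s b) = f z := by rw [hb]
      rw [hfs] at this
      rw [this, hz]; split <;> simp [hf]
    rw [hbfx] at hb
    by_cases hc : s (f x) = x
    · rw [hc] at hb; simp only [hz, if_pos hc] at hb; exact hxy hb
    · simp only [hz, if_neg hc] at hb; exact hc hb
  have : Injective (fun q : B ⊕ Unit => Sum.elim s (fun _ => z) q) := by
    intro q1 q2 h
    cases q1 with
    | inl b1 => cases q2 with
      | inl b2 => exact congrArg Sum.inl (hsi (by simpa using h))
      | inr u => exact absurd (by simpa using h) (hzne b1)
    | inr u => cases q2 with
      | inl b2 => exact absurd (by simpa using h.symm) (hzne b2)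
      | inr u2 => rfl
  calc Nat.card B + 1 = Nat.card (B ⊕ Unit) := by simp [Nat.card_sum]
    _ ≤ Nat.card A := Nat.card_le_card_of_injective _ this

lemma card_le_card_add_one [Finite A] [Finite B] (f : A → B) (b0 : A)
    (hinj : ∀ x y, x ≠ b0 → y ≠ b0 → f x = f y → x = y) : Nat.card A ≤ Nat.card B + 1 := by
  classical
  have : Injective (fun x : A => if x = b0 then (Sum.inr () : B ⊕ Unit) else Sum.inl (f x)) := by
    intro x y h
    by_cases hx : x = b0 <;> by_cases hy : y = b0 <;> simp [hx, hy] at h ⊢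
    exact hinj x y hx hy h
  calc Nat.card A ≤ Nat.card (B ⊕ Unit) := Nat.card_le_card_of_injective _ this
    _ = Nat.card B + 1 := by simp [Nat.card_sum]

lemma two_mul_card_le [Finite A] (f : A → B) (hs : Surjective f)
    (h2 : ∀ x : A, ∃ y, y ≠ x ∧ f y = f x) : 2 * Nat.card B ≤ Nat.card A := by
  classical
  have : Finite B := Finite.of_surjective f hs
  have := Fintype.ofFinite A
  have := Fintype.ofFinite B
  have key : (Finset.univ : Finset A).card
      = ∑ b : B, (Finset.univ.filter (fun a => f a = b)).card :=
    Finset.card_eq_sum_card_fiberwise (fun x _ => Finset.mem_univ _)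
  rw [Nat.card_eq_fintype_card, Nat.card_eq_fintype_card]
  have : ∀ b : B, 2 ≤ (Finset.univ.filter (fun a => f a = b)).card := by
    intro b
    obtain ⟨x, hx⟩ := hs b
    obtain ⟨y, hy, hfy⟩ := h2 x
    apply Finset.one_lt_card.mpr
    exact ⟨x, by simp [hx], y, by simp [hfy, hx], fun h => hy h.symm⟩
  calc 2 * Fintype.card B = ∑ _b : B, 2 := by simp [mul_comm]
    _ ≤ ∑ b : B, (Finset.univ.filter (fun a => f a = b)).card :=
        Finset.sum_le_sum (fun b _ => this b)
    _ = Fintype.card A := key.symm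

end Counting

section NCL
open Function Relation
variable {X : Type}

/-- number of classes of the equivalence generated by `r` -/
noncomputable def ncl (r : X → X → Prop) : ℕ :=
  Nat.card (Quotient (Relation.EqvGen.setoid r))

lemma eqvGen_trans_le {r r' : X → X → Prop} (h : ∀ x y, r x y → EqvGen r' x y) :
    ∀ {x y}, EqvGen r x y → EqvGen r' x y := by
  intro x y hxy
  have := Relation.EqvGen.mono h _ _ hxy
  rwa [Equivalence.eqvGen_iff (Relation.EqvGen.is_equivalence r')] at this

/-- canonical map between quotients -/
noncomputable def nclMap {r r' : X → X → Prop} (h : ∀ x y, r x y → EqvGen r' x y) :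
    Quotient (Relation.EqvGen.setoid r) → Quotient (Relation.EqvGen.setoid r') :=
  Quotient.map (fun x => x) (fun x y hxy => eqvGen_trans_le h hxy)

lemma nclMap_mk {r r' : X → X → Prop} (h : ∀ x y, r x y → EqvGen r' x y) (x : X) :
    nclMap h (Quotient.mk _ x) = Quotient.mk _ x := rfl

lemma nclMap_surjective {r r' : X → X → Prop} (h : ∀ x y, r x y → EqvGen r' x y) :
    Surjective (nclMap h) := by
  intro q
  obtain ⟨x, rfl⟩ := Quotient.exists_rep q
  exact ⟨Quotient.mk _ x, rfl⟩

lemma ncl_mono [Finite X] {r r' : X → X → Prop} (h : ∀ x y, r x y → EqvGen r' x y) :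
    ncl r' ≤ ncl r :=
  Nat.card_le_card_of_surjective _ (nclMap_surjective h)

lemma ncl_eq [Finite X] {r r' : X → X → Prop} (h : ∀ x y, r x y → EqvGen r' x y)
    (h' : ∀ x y, r' x y → EqvGen r x y) : ncl r = ncl r' :=
  le_antisymm (ncl_mono h') (ncl_mono h)

lemma ncl_le_card [Finite X] (r : X → X → Prop) : ncl r ≤ Nat.card X :=
  Nat.card_le_card_of_surjective (Quotient.mk _) (Quotient.exists_rep)

lemma quotient_eq_iff {r : X → X → Prop} {x y : X} :
    (Quotient.mk (Relation.EqvGen.setoid r) x = Quotient.mk _ y) ↔ EqvGen r x y :=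
  ⟨fun h => Quotient.exact h, fun h => Quotient.sound h⟩

/-- adding one pair to a relation decreases the class count by at most one -/
lemma ncl_le_ncl_pair_add_one [Finite X] (r : X → X → Prop) (a b : X) :
    ncl r ≤ ncl (fun x y => r x y ∨ (x = a ∧ y = b)) + 1 := by
  classical
  set rJ := fun x y => r x y ∨ (x = a ∧ y = b) with hrJ
  have hle : ∀ x y, r x y → EqvGen rJ x y := fun x y h => EqvGen.rel _ _ (Or.inl h)
  -- characterize the join
  have hJR : ∀ x y, EqvGen rJ x y →
      EqvGen r x y ∨ ((EqvGen r x a ∨ EqvGen r x b) ∧ (EqvGen r y a ∨ EqvGen r y b)) := by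
    intro x y hxy
    induction hxy with
    | rel x y hxy =>
      rcases hxy with h | ⟨rfl, rfl⟩
      · exact Or.inl (EqvGen.rel _ _ h)
      · exact Or.inr ⟨Or.inl (EqvGen.refl _), Or.inr (EqvGen.refl _)⟩
    | refl x => exact Or.inl (EqvGen.refl _)
    | symm x y _ ih =>
      rcases ih with h | ⟨h1, h2⟩
      · exact Or.inl (EqvGen.symm _ _ h)
      · exact Or.inr ⟨h2, h1⟩
    | trans x y z _ _ ih1 ih2 =>
      rcases ih1 with h1 | ⟨h1a, h1b⟩
      · rcases ih2 with h2 | ⟨h2a, h2b⟩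
        · exact Or.inl (EqvGen.trans _ _ _ h1 h2)
        · refine Or.inr ⟨?_, h2b⟩
          rcases h2a with h | h
          · exact Or.inl (EqvGen.trans _ _ _ h1 h)
          · exact Or.inr (EqvGen.trans _ _ _ h1 h)
      · rcases ih2 with h2 | ⟨h2a, h2b⟩
        · refine Or.inr ⟨h1a, ?_⟩
          rcases h1b with h | h
          · exact Or.inl (EqvGen.trans _ _ _ (EqvGen.symm _ _ h2) h)
          · exact Or.inr (EqvGen.trans _ _ _ (EqvGen.symm _ _ h2) h)
        · exact Or.inr ⟨h1a, h2b⟩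
  apply card_le_card_add_one (nclMap hle) (Quotient.mk _ b)
  intro q1 q2 hq1 hq2 hfq
  obtain ⟨x, rfl⟩ := Quotient.exists_rep q1
  obtain ⟨y, rfl⟩ := Quotient.exists_rep q2
  rw [nclMap_mk, nclMap_mk, quotient_eq_iff] at hfq
  rw [quotient_eq_iff]
  rcases hJR _ _ hfq with h | ⟨hx, hy⟩
  · exact h
  · have hx' : EqvGen r x a := by
      rcases hx with h | h
      · exact h
      · exact absurd (quotient_eq_iff.mpr h) hq1
    have hy' : EqvGen r y a := by
      rcases hy with h | h
      · exact h
      · exact absurd (quotient_eq_iff.mpr h) hq2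
    exact EqvGen.trans _ _ _ hx' (EqvGen.symm _ _ hy')

lemma ncl_pair_add_one_le [Finite X] {r r' : X → X → Prop}
    (h : ∀ x y, r x y → EqvGen r' x y) {a b : X}
    (hab : EqvGen r' a b) (hnab : ¬ EqvGen r a b) : ncl r' + 1 ≤ ncl r := by
  refine card_add_one_le_of_surj (nclMap h) (nclMap_surjective h)
    (x := Quotient.mk _ a) (y := Quotient.mk _ b) ?_ ?_
  · exact fun hq => hnab (quotient_eq_iff.mp hq)
  · rw [nclMap_mk, nclMap_mk]
    exact quotient_eq_iff.mpr hab

end NCL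

section Cycles
open Function Relation Equiv
variable {X : Type} [Finite X] [DecidableEq X]

/-- cycle count of a permutation -/
noncomputable def cyc (σ : Perm X) : ℕ := ncl (fun x y => σ x = y)

lemma sameCycle_imp_eqvGen {r : X → X → Prop} {π : Perm X} (h : ∀ x, EqvGen r x (π x))
    {x y : X} (hxy : π.SameCycle x y) : EqvGen r x y := by
  obtain ⟨n, -, rfl⟩ := hxy.exists_pow_eq'
  clear hxy
  induction n generalizing x with
  | zero => simpa using EqvGen.refl x
  | succ n ih =>
    have hps : (π ^ (n+1)) x = (π ^ n) (π x) := by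
      rw [pow_succ, Equiv.Perm.mul_apply]
    rw [hps]
    exact EqvGen.trans _ _ _ (h x) ih

lemma eqvGen_iff_sameCycle (σ : Perm X) (x y : X) :
    EqvGen (fun x y => σ x = y) x y ↔ σ.SameCycle x y := by
  constructor
  · intro h
    induction h with
    | rel a b hab => exact ⟨1, by simpa using hab⟩
    | refl a => exact Equiv.Perm.SameCycle.refl _ _
    | symm a b _ ih => exact ih.symm
    | trans a b c _ _ ih1 ih2 => exact ih1.trans ih2
  · exact fun h => sameCycle_imp_eqvGen (fun z => EqvGen.rel _ _ rfl) h

lemma exists_return (ρ : Perm X) (a : X) : ∃ n, 0 < n ∧ (ρ ^ n) a = a :=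
  ⟨orderOf ρ, orderOf_pos ρ, by simp [pow_orderOf_eq_one]⟩

/-- splitting a cycle: if `a`, `b` are on the same cycle of `ρ`, they are on different
cycles of `ρ * swap a b`. -/
lemma split_sc (ρ : Perm X) {a b : X} (hab : a ≠ b) (hsc : ρ.SameCycle a b) :
    ¬ (ρ * Equiv.swap a b).SameCycle a b := by
  classical
  set ρ' := ρ * Equiv.swap a b with hρ'
  have hρ'app : ∀ x, ρ' x = ρ (Equiv.swap a b x) := fun x => rfl
  obtain ⟨m0, -, hm0⟩ := hsc.exists_pow_eq'
  have hPex : ∃ n, (ρ ^ n) a = b := ⟨m0, hm0⟩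
  set m := Nat.find hPex with hmdef
  have hm : (ρ ^ m) a = b := Nat.find_spec hPex
  have hmpos : 0 < m := by
    rcases Nat.eq_zero_or_pos m with h | h
    · exfalso; apply hab; rw [← hm, h, pow_zero]; rfl
    · exact h
  set MQ := exists_return ρ a
  set M := Nat.find MQ with hMdef
  obtain ⟨hMpos, hM⟩ : 0 < M ∧ (ρ ^ M) a = a := Nat.find_spec MQ
  have hret : ∀ j, 0 < j → j < M → (ρ ^ j) a ≠ a := by
    intro j hj hjM hja
    exact Nat.find_min MQ hjM ⟨hj, hja⟩
  have hmM : m < M := by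
    by_contra hle
    push_neg at hle
    have key : (ρ ^ (m - M)) a = b := by
      have : (ρ ^ (m - M)) ((ρ ^ M) a) = (ρ ^ m) a := by
        rw [← Equiv.Perm.mul_apply, ← pow_add, Nat.sub_add_cancel hle]
      rw [hM] at this; rw [this, hm]
    have := Nat.find_min' hPex key
    omega
  have hnotb : ∀ j, j < M → j ≠ m → (ρ ^ j) a ≠ b := by
    intro j hjM hjm hjb
    rcases Nat.lt_or_ge j m with h | h
    · exact absurd (Nat.find_min' hPex hjb) (by omega)
    · have hlt : 0 < j - m := by omega
      have : (ρ ^ m) ((ρ ^ (j - m)) a) = (ρ ^ m) a := by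
        rw [← Equiv.Perm.mul_apply, ← pow_add]
        have : m + (j - m) = j := by omega
        rw [this, hjb, hm]
      have := (Equiv.injective _) this
      exact hret _ hlt (by omega) this
  set S : X → Prop := fun x => ∃ j, (j = 0 ∨ (m < j ∧ j < M)) ∧ (ρ ^ j) a = x with hS
  have hbS : ¬ S b := by
    rintro ⟨j, hj | ⟨hj1, hj2⟩, hjb⟩
    · apply hab; rw [← hjb, hj, pow_zero]; rfl
    · exact hnotb j hj2 (by omega) hjb
  have hstep : ∀ x, S x → S (ρ' x) := by
    rintro x ⟨j, hj | ⟨hj1, hj2⟩, rfl⟩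
    · subst hj
      have hxa : (ρ ^ 0) a = a := rfl
      rw [hxa, hρ'app, Equiv.swap_apply_left]
      have : ρ b = (ρ ^ (m + 1)) a := by rw [← hm, ← Equiv.Perm.mul_apply, ← pow_succ']
      rw [this]
      rcases Nat.lt_or_ge (m + 1) M with h | h
      · exact ⟨m + 1, Or.inr ⟨by omega, h⟩, rfl⟩
      · have hmm1 : m + 1 = M := by omega
        exact ⟨0, Or.inl rfl, by rw [pow_zero, hmm1, hM]; rfl⟩
    · have hxa : (ρ ^ j) a ≠ a := hret j (by omega) hj2
      have hxb : (ρ ^ j) a ≠ b := hnotb j hj2 (by omega)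
      rw [hρ'app, Equiv.swap_apply_of_ne_of_ne hxa hxb]
      have : ρ ((ρ ^ j) a) = (ρ ^ (j + 1)) a := by rw [← Equiv.Perm.mul_apply, ← pow_succ']
      rw [this]
      rcases Nat.lt_or_ge (j + 1) M with h | h
      · exact ⟨j + 1, Or.inr ⟨by omega, h⟩, rfl⟩
      · have hjj1 : j + 1 = M := by omega
        exact ⟨0, Or.inl rfl, by rw [pow_zero, hjj1, hM]; rfl⟩
  have hall : ∀ n, S ((ρ' ^ n) a) := by
    intro n
    induction n with
    | zero => exact ⟨0, Or.inl rfl, rfl⟩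
    | succ n ih =>
      have : (ρ' ^ (n + 1)) a = ρ' ((ρ' ^ n) a) := by rw [pow_succ']; exact Equiv.Perm.mul_apply _ _ _
      rw [this]; exact hstep _ ih
  intro hsc'
  obtain ⟨n, -, hn⟩ := hsc'.exists_pow_eq'
  exact hbS (hn ▸ hall n)

/-- merging two cycles -/
lemma merge_sc (ρ : Perm X) {a b : X} (hab : a ≠ b) (hsc : ¬ ρ.SameCycle a b) :
    (ρ * Equiv.swap a b).SameCycle a b := by
  classical
  set ρ' := ρ * Equiv.swap a b with hρ'
  have hρ'app : ∀ x, ρ' x = ρ (Equiv.swap a b x) := fun x => rfl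
  set MQ := exists_return ρ a
  set M := Nat.find MQ with hMdef
  obtain ⟨hMpos, hM⟩ : 0 < M ∧ (ρ ^ M) a = a := Nat.find_spec MQ
  have hret : ∀ j, 0 < j → j < M → (ρ ^ j) a ≠ a := fun j hj hjM hja =>
    Nat.find_min MQ hjM ⟨hj, hja⟩
  have hnotb : ∀ j, (ρ ^ j) a ≠ b := by
    intro j hjb
    exact hsc ⟨(j : ℤ), by rw [zpow_natCast, hjb]⟩
  have key : ∀ j, 1 ≤ j → j ≤ M → (ρ' ^ j) b = (ρ ^ j) a := by
    intro j hj1 hjM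
    induction j with
    | zero => omega
    | succ j ih =>
      rcases Nat.eq_zero_or_pos j with hj0 | hjpos
      · subst hj0
        show (ρ' ^ 1) b = (ρ ^ 1) a
        rw [pow_one, pow_one, hρ'app, Equiv.swap_apply_right]
      · have ihe : (ρ' ^ j) b = (ρ ^ j) a := ih hjpos (by omega)
        have e1 : (ρ' ^ (j + 1)) b = ρ' ((ρ' ^ j) b) := by
          rw [pow_succ']; exact Equiv.Perm.mul_apply _ _ _
        have e2 : (ρ ^ (j + 1)) a = ρ ((ρ ^ j) a) := by
          rw [pow_succ']; exact Equiv.Perm.mul_apply _ _ _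
        rw [e1, e2, ihe, hρ'app,
          Equiv.swap_apply_of_ne_of_ne (hret j hjpos (by omega)) (hnotb j)]
  have : (ρ' ^ M) b = a := by rw [key M hMpos le_rfl, hM]
  exact (Equiv.Perm.SameCycle.symm ⟨(M : ℤ), by rw [zpow_natCast, this]⟩)

end Cycles

section Genus
open Function Relation Equiv
variable {X : Type} [Finite X] [DecidableEq X]

lemma prel_mul_swap_le (ρ : Perm X) (a b : X) :
    ∀ x y, (ρ * Equiv.swap a b) x = y →
      EqvGen (fun x y => ρ x = y ∨ (x = a ∧ y = b)) x y := by
  intro x y h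
  by_cases hx : x = a
  · subst hx
    have hy : y = ρ b := by rw [← h, Equiv.Perm.mul_apply, Equiv.swap_apply_left]
    subst hy
    exact EqvGen.trans _ _ _ (EqvGen.rel _ _ (Or.inr ⟨rfl, rfl⟩)) (EqvGen.rel _ _ (Or.inl rfl))
  · by_cases hx' : x = b
    · subst hx'
      have hy : y = ρ a := by rw [← h, Equiv.Perm.mul_apply, Equiv.swap_apply_right]
      subst hy
      exact EqvGen.trans _ _ _ (EqvGen.symm _ _ (EqvGen.rel _ _ (Or.inr ⟨rfl, rfl⟩)))
        (EqvGen.rel _ _ (Or.inl rfl))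
    · have hy : y = ρ x := by rw [← h, Equiv.Perm.mul_apply, Equiv.swap_apply_of_ne_of_ne hx hx']
      subst hy
      exact EqvGen.rel _ _ (Or.inl rfl)

lemma ρ_eq_mul_swap_swap (ρ : Perm X) (a b : X) : ρ = (ρ * Equiv.swap a b) * Equiv.swap a b := by
  rw [mul_assoc, Equiv.swap_mul_self, mul_one]

lemma cyc_mul_swap_le (ρ : Perm X) {a b : X} : cyc (ρ * Equiv.swap a b) ≤ cyc ρ + 1 := by
  have h1 : cyc (ρ * Equiv.swap a b) ≤
      ncl (fun x y => (ρ * Equiv.swap a b) x = y ∨ (x = a ∧ y = b)) + 1 :=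
    ncl_le_ncl_pair_add_one _ a b
  have h2 : ncl (fun x y => (ρ * Equiv.swap a b) x = y ∨ (x = a ∧ y = b)) =
      ncl (fun x y => ρ x = y ∨ (x = a ∧ y = b)) := by
    apply ncl_eq
    · intro x y h
      rcases h with h | h
      · exact prel_mul_swap_le ρ a b x y h
      · exact EqvGen.rel _ _ (Or.inr h)
    · intro x y h
      rcases h with h | h
      · have : ((ρ * Equiv.swap a b) * Equiv.swap a b) x = y := by
          rw [← ρ_eq_mul_swap_swap]; exact h
        exact prel_mul_swap_le (ρ * Equiv.swap a b) a b x y this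
      · exact EqvGen.rel _ _ (Or.inr h)
  have h3 : ncl (fun x y => ρ x = y ∨ (x = a ∧ y = b)) ≤ cyc ρ := by
    apply ncl_mono
    intro x y h
    exact EqvGen.rel _ _ (Or.inl h)
  omega

lemma split_cyc (ρ : Perm X) {a b : X} (hab : a ≠ b) (hsc : ρ.SameCycle a b) :
    cyc (ρ * Equiv.swap a b) = cyc ρ + 1 := by
  refine le_antisymm (cyc_mul_swap_le ρ) ?_
  have key : ncl (fun x y => ρ x = y ∨ (x = a ∧ y = b)) + 1 ≤ cyc (ρ * Equiv.swap a b) := by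
    apply ncl_pair_add_one_le (prel_mul_swap_le ρ a b)
    · exact EqvGen.rel _ _ (Or.inr ⟨rfl, rfl⟩)
    · intro h
      exact split_sc ρ hab hsc ((eqvGen_iff_sameCycle _ _ _).mp h)
  have h2 : ncl (fun x y => ρ x = y ∨ (x = a ∧ y = b)) = cyc ρ := by
    apply ncl_eq
    · intro x y h
      rcases h with h | ⟨rfl, rfl⟩
      · exact EqvGen.rel _ _ h
      · exact (eqvGen_iff_sameCycle _ _ _).mpr hsc
    · intro x y h
      exact EqvGen.rel _ _ (Or.inl h)
  omega

lemma merge_cyc (ρ : Perm X) {a b : X} (hab : a ≠ b) (hsc : ¬ ρ.SameCycle a b) :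
    cyc ρ = cyc (ρ * Equiv.swap a b) + 1 := by
  have h1 := merge_sc ρ hab hsc
  have h2 := split_cyc (ρ * Equiv.swap a b) hab h1
  rwa [← ρ_eq_mul_swap_swap] at h2

/-- number of orbits of the group generated by two permutations -/
noncomputable def tcl (σ τ : Perm X) : ℕ := ncl (fun x y => σ x = y ∨ τ x = y)

lemma cyc_one : cyc (1 : Perm X) = Nat.card X := by
  have hrel : ∀ x y : X, EqvGen (fun x y => (1 : Perm X) x = y) x y → x = y := by
    intro x y h
    induction h with
    | rel a b hab => simpa using hab
    | refl a => rfl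
    | symm a b _ ih => exact ih.symm
    | trans a b c _ _ ih1 ih2 => exact ih1.trans ih2
  apply Nat.card_eq_of_bijective
    (f := Quotient.lift (fun x : X => x) (fun x y h => hrel x y h))
  constructor
  · intro q1 q2 h
    obtain ⟨x, rfl⟩ := Quotient.exists_rep q1
    obtain ⟨y, rfl⟩ := Quotient.exists_rep q2
    simp only [Quotient.lift_mk] at h
    exact Quotient.sound (h ▸ EqvGen.refl x)
  · intro x
    exact ⟨Quotient.mk _ x, rfl⟩

lemma tcl_one (σ : Perm X) : tcl σ 1 = cyc σ := by
  apply ncl_eq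
  · intro x y h
    rcases h with h | h
    · exact EqvGen.rel _ _ h
    · have : x = y := by simpa using h
      subst this; exact EqvGen.refl x
  · intro x y h
    exact EqvGen.rel _ _ (Or.inl h)

theorem genus_ineq (σ τ : Perm X) :
    cyc σ + cyc τ + cyc (σ * τ) ≤ Nat.card X + 2 * tcl σ τ := by
  suffices H : ∀ k (τ : Perm X), Nat.card X - cyc τ = k →
      cyc σ + cyc τ + cyc (σ * τ) ≤ Nat.card X + 2 * tcl σ τ from H _ τ rfl
  intro k
  induction k using Nat.strong_induction_on with
  | _ k ih =>
    intro τ hk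
    by_cases hτ : τ = 1
    · subst hτ
      rw [mul_one, cyc_one, tcl_one]
      omega
    · have ha : ∃ a, τ a ≠ a := by
        by_contra hno
        push_neg at hno
        exact hτ (Equiv.ext fun x => by rw [hno x]; rfl)
      obtain ⟨a, ha⟩ := ha
      set b := τ a with hb
      have hab : a ≠ b := fun h => ha (by rw [hb] at h; exact h.symm)
      set τ' := τ * Equiv.swap a b with hτ'
      have hscab : τ.SameCycle a b := ⟨1, by simp [hb]⟩
      have hcτ' : cyc τ' = cyc τ + 1 := split_cyc τ hab hscab
      have hcτ'le : cyc τ' ≤ Nat.card X := ncl_le_card _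
      have IH := ih (Nat.card X - cyc τ') (by omega) τ' rfl
      set ρ := σ * τ' with hρ
      have hστ : σ * τ = ρ * Equiv.swap a b := by
        rw [hρ, hτ', mul_assoc, mul_assoc, Equiv.swap_mul_self, mul_one]
      -- τ'-step facts
      have hτ'a : τ' a = τ b := by rw [hτ', Equiv.Perm.mul_apply, Equiv.swap_apply_left]
      have hτ'b : τ' b = b := by rw [hτ', Equiv.Perm.mul_apply, Equiv.swap_apply_right, ← hb]
      have hτ'x : ∀ x, x ≠ a → x ≠ b → τ' x = τ x := by
        intro x h1 h2
        rw [hτ', Equiv.Perm.mul_apply, Equiv.swap_apply_of_ne_of_ne h1 h2]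
      have hd2 : ∀ x y : X, (σ x = y ∨ τ' x = y) → EqvGen (fun x y => σ x = y ∨ τ x = y) x y := by
        intro x y h
        rcases h with h | h
        · exact EqvGen.rel _ _ (Or.inl h)
        · by_cases hx : x = a
          · subst hx; rw [hτ'a] at h
            exact EqvGen.trans _ _ _ (EqvGen.rel _ _ (Or.inr hb.symm))
              (h ▸ EqvGen.rel _ _ (Or.inr rfl))
          · by_cases hx' : x = b
            · subst hx'; rw [hτ'b] at h
              exact h ▸ EqvGen.refl b
            · rw [hτ'x x hx hx'] at h
              exact EqvGen.rel _ _ (Or.inr h)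
      by_cases hH : EqvGen (fun x y => σ x = y ∨ τ' x = y) a b
      · -- the two orbit relations coincide
        have ht : tcl σ τ = tcl σ τ' := by
          apply ncl_eq
          · intro x y h
            rcases h with h | h
            · exact EqvGen.rel _ _ (Or.inl h)
            · by_cases hx : x = a
              · subst hx
                have : y = b := by rw [← h, hb]
                subst this; exact hH
              · by_cases hx' : x = b
                · subst hx'
                  have : y = τ' a := by rw [hτ'a, ← h]
                  subst this
                  exact EqvGen.trans _ _ _ (EqvGen.symm _ _ hH) (EqvGen.rel _ _ (Or.inr rfl))
                · rw [← hτ'x x hx hx'] at h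
                  exact EqvGen.rel _ _ (Or.inr h)
          · exact hd2
        have hc : cyc (ρ * Equiv.swap a b) ≤ cyc ρ + 1 := cyc_mul_swap_le ρ
        rw [hστ]
        omega
      · -- merge case
        have hnsc : ¬ ρ.SameCycle a b := by
          intro hsc
          apply hH
          refine sameCycle_imp_eqvGen (fun x => ?_) hsc
          have : ρ x = σ (τ' x) := Equiv.Perm.mul_apply _ _ _
          exact this ▸ EqvGen.trans _ _ _ (EqvGen.rel _ _ (Or.inr rfl))
            (EqvGen.rel _ _ (Or.inl rfl))
        have hcm : cyc ρ = cyc (ρ * Equiv.swap a b) + 1 := merge_cyc ρ hab hnsc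
        have htt : tcl σ τ' ≤ tcl σ τ + 1 := by
          have e1 : tcl σ τ' ≤ ncl (fun x y => (σ x = y ∨ τ' x = y) ∨ (x = a ∧ y = b)) + 1 :=
            ncl_le_ncl_pair_add_one _ a b
          have e2 : ncl (fun x y => (σ x = y ∨ τ' x = y) ∨ (x = a ∧ y = b)) = tcl σ τ := by
            apply ncl_eq
            · intro x y h
              rcases h with h | ⟨rfl, rfl⟩
              · exact hd2 x y h
              · exact EqvGen.rel _ _ (Or.inr hb.symm)
            · intro x y h
              rcases h with h | h
              · exact EqvGen.rel _ _ (Or.inl (Or.inl h))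
              · by_cases hx : x = a
                · subst hx
                  have : y = b := by rw [← h, hb]
                  subst this
                  exact EqvGen.rel _ _ (Or.inr ⟨rfl, rfl⟩)
                · by_cases hx' : x = b
                  · subst hx'
                    have : y = τ' a := by rw [hτ'a, ← h]
                    subst this
                    exact EqvGen.trans _ _ _
                      (EqvGen.symm _ _ (EqvGen.rel _ _ (Or.inr ⟨rfl, rfl⟩)))
                      (EqvGen.rel _ _ (Or.inl (Or.inr rfl)))
                  · rw [← hτ'x x hx hx'] at h
                    exact EqvGen.rel _ _ (Or.inl (Or.inr h))
          omega
        rw [hστ]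
        omega

end Genus

structure CGraph (C V : Type) where
  inv : C → V → V
  invol : ∀ c v, inv c (inv c v) = v
  no_fixed : ∀ c v, inv c v ≠ v

namespace CGraph

variable {C V : Type}

/-- `g G B` = number of connected components of the spanning subgraph `Γ_B` consisting of
the edges whose color lies in `B`. -/
noncomputable def g (G : CGraph C V) (B : Set C) : ℕ :=
  Nat.card (Quotient (Relation.EqvGen.setoid (fun v w : V => ∃ c ∈ B, G.inv c v = w)))

/-- connectedness of the colored graph -/
def Conn (G : CGraph C V) : Prop := G.g Set.univ = 1

/-- the spanning subgraph `Γ_B` of edges colored in `B`, as a colored graph with color set `B` -/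
def restrict (G : CGraph C V) (B : Set C) : CGraph B V where
  inv c v := G.inv c.val v
  invol c v := G.invol c.val v
  no_fixed c v := G.no_fixed c.val v

/-- reachability in the colored graph -/
def reach (G : CGraph C V) : V → V → Prop :=
  Relation.EqvGen (fun v w : V => ∃ c, G.inv c v = w)

/-- the connected component of `G` containing `v0`, as a colored graph on the vertices
reachable from `v0` -/
def component (G : CGraph C V) (v0 : V) : CGraph C {w : V // G.reach v0 w} where
  inv c w := ⟨G.inv c w.val,
    Relation.EqvGen.trans _ _ _ w.property (Relation.EqvGen.rel _ _ ⟨c, rfl⟩)⟩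
  invol c w := Subtype.ext (G.invol c w.val)
  no_fixed c w h := G.no_fixed c w.val (congrArg Subtype.val h)

/-- A cyclic permutation of the (finite) color set: a permutation consisting of a single cycle
through all the colors.  Cyclic permutations `ε = (ε_0, …, ε_d)` of the color set, up to
rotation, correspond bijectively to such permutations `σ` (via `σ : ε_j ↦ ε_{j+1}`), and
taking the inverse cyclic permutation corresponds to `σ ↦ σ⁻¹`. -/
def IsCyclicPerm (σ : Equiv.Perm C) : Prop := σ.IsCycle ∧ ∀ c, σ c ≠ c

/-- Euler characteristic `χ_σ(Γ) = Σ_{j} g_{ε_j ε_{j+1}} + (1-(n-1))·p` of the surface of the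
regular embedding associated with the cyclic permutation `σ`; here `n = #C`, the graph has
order `2p` (i.e. `p = (#V)/2`), and the consecutive pairs `{ε_j, ε_{j+1}}` are exactly the
pairs `{c, σ c}`, `c ∈ C`. -/
noncomputable def chi (G : CGraph C V) (σ : Equiv.Perm C) : ℚ :=
  (∑ᶠ c : C, (G.g {c, σ c} : ℚ)) +
    (2 - (Nat.card C : ℚ)) * ((Nat.card V : ℚ) / 2)

/-- the genus `ρ_σ` of the regular embedding associated with `σ`:
for a connected graph it is `(2 - χ_σ)/2`; in general (`g G Set.univ` connected components)
it is the sum of the genera of the connected components, matching the convention that the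
genus/G-degree of a disconnected colored graph is the sum over its connected components. -/
noncomputable def rho (G : CGraph C V) (σ : Equiv.Perm C) : ℚ :=
  (2 * (G.g Set.univ : ℚ) - G.chi σ) / 2

/-- the Gurau degree `ω_G(Γ) = Σ ρ_ε(Γ)`, the sum over the cyclic permutations of the color
set up to inverse; each class `{σ, σ⁻¹}` has `ρ_σ = ρ_{σ⁻¹}`, whence the division by `2`. -/
noncomputable def omegaG (G : CGraph C V) : ℚ :=
  (∑ᶠ σ : {σ : Equiv.Perm C // IsCyclicPerm σ}, G.rho σ.val) / 2

/-- bipartiteness -/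
def Bipartite (G : CGraph C V) : Prop := ∃ f : V → Bool, ∀ c v, f (G.inv c v) ≠ f v

/-- color-preserving isomorphism of colored graphs -/
def IsIso {V' : Type} (G : CGraph C V) (G' : CGraph C V') : Prop :=
  ∃ e : V ≃ V', ∀ c v, e (G.inv c v) = G'.inv c (e v)

end CGraph

section GraphPerm
open Function Relation Equiv CGraph

/-- parity: `v` and `J v` never lie on the same cycle of `I ∘ J`, for fixed-point-free
involutions `I`, `J`. -/
lemma no_sameCycle_inv {X : Type} [Finite X] (I J : Equiv.Perm X)
    (hI : ∀ x, I x ≠ x) (hJ : ∀ x, J x ≠ x)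
    (hIi : ∀ x, I (I x) = x) (hJi : ∀ x, J (J x) = x) (v : X) :
    ¬ (I * J).SameCycle v (J v) := by
  rintro ⟨m, hm⟩
  set α := I * J with hα
  have hJJ : J * J = 1 := Equiv.ext fun x => hJi x
  have hII : I * I = 1 := Equiv.ext fun x => hIi x
  have hJinv : J⁻¹ = J := inv_eq_of_mul_eq_one_right hJJ
  have hIinv : I⁻¹ = I := inv_eq_of_mul_eq_one_right hII
  have h1 : J * α * J⁻¹ = α⁻¹ := by
    rw [hJinv, hα, mul_inv_rev, hIinv, hJinv]
    ext x
    show J (I (J (J x))) = J (I x)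
    rw [hJi]
  have hconj : ∀ k : ℤ, J * α ^ k = α ^ (-k) * J := by
    intro k
    have h2 : J * α ^ k * J⁻¹ = (J * α * J⁻¹) ^ k := by
      have := map_zpow (MulAut.conj J) α k
      simpa [MulAut.conj_apply] using this
    rw [h1] at h2
    have h3 : J * α ^ k = (α⁻¹) ^ k * J := by
      calc J * α ^ k = (J * α ^ k * J⁻¹) * J := by rw [mul_assoc, inv_mul_cancel, mul_one]
        _ = (α⁻¹) ^ k * J := by rw [h2]
    rw [h3, inv_zpow, zpow_neg]
  have hJα : ∀ (k : ℤ) (x : X), J ((α ^ k) x) = (α ^ (-k)) (J x) := by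
    intro k x
    calc J ((α ^ k) x) = (J * α ^ k) x := rfl
      _ = (α ^ (-k) * J) x := by rw [hconj k]
      _ = (α ^ (-k)) (J x) := rfl
  have hαJ : ∀ x, α (J x) = I x := by
    intro x
    show I (J (J x)) = I x
    rw [hJi]
  rcases Int.even_or_odd m with ⟨k, hk⟩ | ⟨k, hk⟩
  · -- m = k + k : J has a fixed point
    apply hJ ((α ^ k) v)
    calc J ((α ^ k) v) = (α ^ (-k)) (J v) := hJα k v
      _ = (α ^ (-k)) ((α ^ m) v) := by rw [← hm]
      _ = (α ^ (-k + m)) v := by rw [← Equiv.Perm.mul_apply, ← zpow_add]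
      _ = (α ^ k) v := by rw [show -k + m = k by omega]
  · -- m = 2k + 1 : I has a fixed point
    apply hI ((α ^ (k + 1)) v)
    have hJy : J ((α ^ (k + 1)) v) = (α ^ k) v := by
      calc J ((α ^ (k + 1)) v) = (α ^ (-(k+1))) (J v) := hJα (k+1) v
        _ = (α ^ (-(k+1))) ((α ^ m) v) := by rw [← hm]
        _ = (α ^ (-(k+1) + m)) v := by rw [← Equiv.Perm.mul_apply, ← zpow_add]
        _ = (α ^ k) v := by rw [show -(k+1) + m = k by omega]
    calc I ((α ^ (k + 1)) v) = α (J ((α ^ (k + 1)) v)) := (hαJ _).symm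
      _ = α ((α ^ k) v) := by rw [hJy]
      _ = (α ^ (k + 1)) v := by
          rw [← Equiv.Perm.mul_apply, ← zpow_one_add, show (1 : ℤ) + k = k + 1 by omega]

variable {C V : Type} [Finite V]

/-- the involution of color `c` as a permutation -/
def CGraph.pInv (G : CGraph C V) (c : C) : Equiv.Perm V :=
  Function.Involutive.toPerm (G.inv c) (G.invol c)

lemma CGraph.pInv_apply (G : CGraph C V) (c : C) (v : V) : G.pInv c v = G.inv c v := rfl

lemma CGraph.g_eq_ncl (G : CGraph C V) (B : Set C) :
    G.g B = ncl (fun v w => ∃ c ∈ B, G.inv c v = w) := rfl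

/-- each `{i,j}`-component carries at least two cycles of `inv i ∘ inv j` -/
lemma CGraph.two_mul_g_le_cyc (G : CGraph C V) (i j : C) :
    2 * G.g {i, j} ≤ cyc (G.pInv i * G.pInv j) := by
  classical
  set α := G.pInv i * G.pInv j with hα
  have hαapp : ∀ v, α v = G.inv i (G.inv j v) := fun v => rfl
  have hle : ∀ v w : V, α v = w → EqvGen (fun v w => ∃ c ∈ ({i, j} : Set C), G.inv c v = w) v w := by
    intro v w h
    subst h
    refine EqvGen.trans _ (G.inv j v) _ ?_ ?_
    · exact EqvGen.rel _ _ ⟨j, Or.inr rfl, rfl⟩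
    · exact EqvGen.rel _ _ ⟨i, Or.inl rfl, rfl⟩
  rw [g_eq_ncl]
  apply two_mul_card_le (nclMap hle) (nclMap_surjective hle)
  intro q
  obtain ⟨v, rfl⟩ := Quotient.exists_rep q
  refine ⟨Quotient.mk _ (G.inv j v), ?_, ?_⟩
  · intro h
    have h2 := quotient_eq_iff.mp h
    rw [eqvGen_iff_sameCycle] at h2
    exact no_sameCycle_inv (G.pInv i) (G.pInv j) (G.no_fixed i) (G.no_fixed j)
      (G.invol i) (G.invol j) v h2.symm
  · rw [nclMap_mk, nclMap_mk]
    apply quotient_eq_iff.mpr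
    exact EqvGen.symm _ _ (EqvGen.rel _ _ ⟨j, Or.inr rfl, rfl⟩)

/-- connectivity in three colors bounds the orbit count of the even subgroup by 2 -/
lemma CGraph.tcl_le_two (G : CGraph C V) {i j k : C} {B : Set C}
    (hi : i ∈ B) (hj : j ∈ B) (hk : k ∈ B)
    (hBsub : ∀ c ∈ B, c = i ∨ c = j ∨ c = k)
    (hconn : G.g B = 1) : tcl (G.pInv i * G.pInv j) (G.pInv j * G.pInv k) ≤ 2 := by
  classical
  set σ := G.pInv i * G.pInv j with hσ
  set τ := G.pInv j * G.pInv k with hτ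
  set R : V → V → Prop := fun x y => σ x = y ∨ τ x = y with hR
  have hσapp : ∀ v, σ v = G.inv i (G.inv j v) := fun v => rfl
  have hτapp : ∀ v, τ v = G.inv j (G.inv k v) := fun v => rfl
  -- conjugation by inv j preserves the relation
  have hconj : ∀ x y, EqvGen R x y → EqvGen R (G.inv j x) (G.inv j y) := by
    intro x y h
    induction h with
    | rel x y hxy =>
      rcases hxy with h | h
      · subst h
        apply EqvGen.symm
        apply EqvGen.rel
        left
        rw [hσapp, hσapp]
        rw [G.invol j, G.invol i]
      · subst h
        apply EqvGen.symm
        apply EqvGen.rel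
        right
        rw [hτapp, hτapp]
        rw [G.invol j, G.invol k]
    | refl x => exact EqvGen.refl _
    | symm x y _ ih => exact EqvGen.symm _ _ ih
    | trans x y z _ _ ih1 ih2 => exact EqvGen.trans _ _ _ ih1 ih2
  -- every vertex reachable in Γ_B is H-equivalent to `w` or `inv j w`
  have hall : ∀ v w, EqvGen (fun v w => ∃ c ∈ B, G.inv c v = w) v w →
      (EqvGen R v w ∨ EqvGen R v (G.inv j w)) := by
    intro v w h
    induction h with
    | rel v w hvw =>
      obtain ⟨c, hc, rfl⟩ := hvw
      rcases hBsub c hc with hci | hcj | hck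
      · right
        apply EqvGen.symm
        apply EqvGen.rel
        left
        rw [hci, hσapp, G.invol j, G.invol i]
      · right
        rw [hcj, G.invol j]
        exact EqvGen.refl _
      · right
        apply EqvGen.rel
        right
        rw [hck, hτapp]
    | refl v => exact Or.inl (EqvGen.refl _)
    | symm v w _ ih =>
      rcases ih with h | h
      · exact Or.inl (EqvGen.symm _ _ h)
      · right
        have h2 := hconj _ _ h
        rw [G.invol j] at h2
        exact EqvGen.symm _ _ h2
    | trans v w u _ _ ih1 ih2 =>
      rcases ih1 with h1 | h1
      · rcases ih2 with h2 | h2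
        · exact Or.inl (EqvGen.trans _ _ _ h1 h2)
        · exact Or.inr (EqvGen.trans _ _ _ h1 h2)
      · rcases ih2 with h2 | h2
        · have h2' := hconj _ _ h2
          exact Or.inr (EqvGen.trans _ _ _ h1 h2')
        · have h2' := hconj _ _ h2
          rw [G.invol j] at h2'
          exact Or.inl (EqvGen.trans _ _ _ h1 (EqvGen.symm _ _ (EqvGen.symm _ _ h2')))
  -- Γ_B fully connected
  have htot : ∀ v w : V, EqvGen (fun v w => ∃ c ∈ B, G.inv c v = w) v w := by
    intro v w
    rw [g_eq_ncl, ncl] at hconn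
    have hsub := (Nat.card_eq_one_iff_exists.mp hconn)
    obtain ⟨q0, hq0⟩ := hsub
    exact quotient_eq_iff.mp ((hq0 _).trans (hq0 _).symm)
  -- V nonempty
  have hne : Nonempty V := by
    by_contra hno
    rw [not_nonempty_iff] at hno
    have h0 : Nat.card V = 0 := Nat.card_of_isEmpty
    have hle : G.g B ≤ Nat.card V := by rw [g_eq_ncl]; exact ncl_le_card _
    omega
  obtain ⟨v0⟩ := hne
  -- surjection from Bool
  have hsurj : Surjective (fun t : Bool =>
      if t then Quotient.mk (Relation.EqvGen.setoid R) v0 else Quotient.mk _ (G.inv j v0)) := by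
    intro q
    obtain ⟨w, rfl⟩ := Quotient.exists_rep q
    rcases hall v0 w (htot v0 w) with h | h
    · exact ⟨true, by simpa using quotient_eq_iff.mpr h⟩
    · refine ⟨false, ?_⟩
      have h2 := hconj _ _ h
      rw [G.invol j] at h2
      simpa using quotient_eq_iff.mpr h2
  calc tcl σ τ ≤ Nat.card Bool := Nat.card_le_card_of_surjective _ hsurj
    _ = 2 := by simp

/-- the key inequality: `Γ_{\hat l}` connected implies the Gagliardi bound -/
lemma CGraph.triple_ineq (G : CGraph C V) {i j k : C} {B : Set C}
    (hi : i ∈ B) (hj : j ∈ B) (hk : k ∈ B)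
    (hBsub : ∀ c ∈ B, c = i ∨ c = j ∨ c = k)
    (hconn : G.g B = 1) :
    2 * (G.g {i, j} + G.g {j, k} + G.g {i, k}) ≤ Nat.card V + 4 := by
  classical
  have h1 := G.two_mul_g_le_cyc i j
  have h2 := G.two_mul_g_le_cyc j k
  have h3 := G.two_mul_g_le_cyc i k
  have hmul : G.pInv i * G.pInv j * (G.pInv j * G.pInv k) = G.pInv i * G.pInv k := by
    ext x
    show G.inv i (G.inv j (G.inv j (G.inv k x))) = G.inv i (G.inv k x)
    rw [G.invol j]
  have hg := genus_ineq (X := V) (G.pInv i * G.pInv j) (G.pInv j * G.pInv k)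
  rw [hmul] at hg
  have ht := G.tcl_le_two hi hj hk hBsub hconn
  omega

end GraphPerm

section Final
open Equiv CGraph

instance : DecidablePred (CGraph.IsCyclicPerm (C := Fin 4)) := fun σ =>
  decidable_of_iff ((∃ x, σ x ≠ x ∧ ∀ y, σ y ≠ y → σ.SameCycle x y) ∧ ∀ c, σ c ≠ c) Iff.rfl

/-- the 4-cycle `(a b c d)` -/
def cyc4 (a b c d : Fin 4) : Perm (Fin 4) :=
  Equiv.swap a b * Equiv.swap b c * Equiv.swap c d

/-- the six cyclic permutations of `Δ₃` -/
def cycSet : Finset (Perm (Fin 4)) :=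
  {cyc4 0 1 2 3, cyc4 0 3 2 1, cyc4 0 1 3 2, cyc4 0 2 3 1, cyc4 0 2 1 3, cyc4 0 3 1 2}

lemma cyclic_iff : ∀ σ : Perm (Fin 4), CGraph.IsCyclicPerm σ ↔ σ ∈ cycSet := by decide

variable {V : Type} [Finite V]

lemma rho_formula (G : CGraph (Fin 4) V) (hconn : G.Conn) (σ : Perm (Fin 4)) :
    G.rho σ = (2 + (Nat.card V : ℚ)
      - ((G.g {0, σ 0} : ℚ) + (G.g {1, σ 1} : ℚ) + (G.g {2, σ 2} : ℚ) + (G.g {3, σ 3} : ℚ))) / 2 := by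
  have h1 : G.g Set.univ = 1 := hconn
  rw [CGraph.rho, CGraph.chi, h1, finsum_eq_sum_of_fintype, Fin.sum_univ_four]
  have h4 : (Nat.card (Fin 4) : ℚ) = 4 := by simp
  rw [h4]
  push_cast
  ring

lemma omega_formula (G : CGraph (Fin 4) V) :
    G.omegaG = (G.rho (cyc4 0 1 2 3) + G.rho (cyc4 0 3 2 1) + G.rho (cyc4 0 1 3 2)
      + G.rho (cyc4 0 2 3 1) + G.rho (cyc4 0 2 1 3) + G.rho (cyc4 0 3 1 2)) / 2 := by
  rw [CGraph.omegaG, finsum_eq_sum_of_fintype,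
    ← Finset.sum_subtype cycSet (fun σ => (cyclic_iff σ).symm) (fun σ => G.rho σ)]
  rw [show cycSet = {cyc4 0 1 2 3, cyc4 0 3 2 1, cyc4 0 1 3 2, cyc4 0 2 3 1, cyc4 0 2 1 3,
    cyc4 0 3 1 2} from rfl]
  rw [Finset.sum_insert (by decide), Finset.sum_insert (by decide), Finset.sum_insert (by decide),
    Finset.sum_insert (by decide), Finset.sum_insert (by decide), Finset.sum_singleton]
  ring

end Final

set_option maxHeartbeats 1000000 in
open CGraph in
/-- Proposition `uguaglianza_G-degree(n=3)`: if `Γ` is an order-`2p`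
crystallization of a closed 3-manifold (`g_î = 1` for all `i` and `χ(K(Γ)) = 0`) and `ρmin` is
its regular genus, then `ω_G(Γ) = 3ρ(Γ)` iff `g_{ij} = (p+2)/3` for all distinct colors
`i, j ∈ Δ₃`. -/
theorem stmt11 {p : ℕ} {ρmin : ℚ} {V : Type} [Finite V]
    (G : CGraph (Fin 4) V) (hconn : G.Conn) (horder : Nat.card V = 2 * p)
    (hcr : ∀ i : Fin 4, G.g {c | c ≠ i} = 1)
    (hchi : (∑ i : Fin 4, (G.g {c | c ≠ i} : ℚ)) -
        (∑ r : Fin 4, ∑ s : Fin 4, if r = s then 0 else (G.g {r, s} : ℚ)) / 2 +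
        2 * (p : ℚ) = 0)
    (hrho : IsLeast {x : ℚ | ∃ σ : Equiv.Perm (Fin 4), IsCyclicPerm σ ∧ G.rho σ = x} ρmin) :
    G.omegaG = 3 * ρmin ↔
      ∀ i j : Fin 4, i ≠ j → (G.g {i, j} : ℚ) = ((p : ℚ) + 2) / 3 := by
  classical
  have hV : (Nat.card V : ℚ) = 2 * (p : ℚ) := by rw [horder]; push_cast; ring
  -- the four triple (Gagliardi) inequalities
  have hB3 : ∀ c ∈ ({c : Fin 4 | c ≠ 3} : Set (Fin 4)), c = 0 ∨ c = 1 ∨ c = 2 := by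
    have h : ∀ c : Fin 4, c ≠ 3 → (c = 0 ∨ c = 1 ∨ c = 2) := by decide
    intro c hc; exact h c hc
  have hB2 : ∀ c ∈ ({c : Fin 4 | c ≠ 2} : Set (Fin 4)), c = 0 ∨ c = 1 ∨ c = 3 := by
    have h : ∀ c : Fin 4, c ≠ 2 → (c = 0 ∨ c = 1 ∨ c = 3) := by decide
    intro c hc; exact h c hc
  have hB1 : ∀ c ∈ ({c : Fin 4 | c ≠ 1} : Set (Fin 4)), c = 0 ∨ c = 2 ∨ c = 3 := by
    have h : ∀ c : Fin 4, c ≠ 1 → (c = 0 ∨ c = 2 ∨ c = 3) := by decide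
    intro c hc; exact h c hc
  have hB0 : ∀ c ∈ ({c : Fin 4 | c ≠ 0} : Set (Fin 4)), c = 1 ∨ c = 2 ∨ c = 3 := by
    have h : ∀ c : Fin 4, c ≠ 0 → (c = 1 ∨ c = 2 ∨ c = 3) := by decide
    intro c hc; exact h c hc
  have t3 := G.triple_ineq (i := 0) (j := 1) (k := 2) (B := {c | c ≠ 3})
    (by rw [Set.mem_setOf_eq]; decide) (by rw [Set.mem_setOf_eq]; decide)
    (by rw [Set.mem_setOf_eq]; decide) hB3 (hcr 3)
  have t2 := G.triple_ineq (i := 0) (j := 1) (k := 3) (B := {c | c ≠ 2})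
    (by rw [Set.mem_setOf_eq]; decide) (by rw [Set.mem_setOf_eq]; decide)
    (by rw [Set.mem_setOf_eq]; decide) hB2 (hcr 2)
  have t1 := G.triple_ineq (i := 0) (j := 2) (k := 3) (B := {c | c ≠ 1})
    (by rw [Set.mem_setOf_eq]; decide) (by rw [Set.mem_setOf_eq]; decide)
    (by rw [Set.mem_setOf_eq]; decide) hB1 (hcr 1)
  have t0 := G.triple_ineq (i := 1) (j := 2) (k := 3) (B := {c | c ≠ 0})
    (by rw [Set.mem_setOf_eq]; decide) (by rw [Set.mem_setOf_eq]; decide)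
    (by rw [Set.mem_setOf_eq]; decide) hB0 (hcr 0)
  have t3q : 2 * ((G.g {0,1} : ℚ) + (G.g {1,2} : ℚ) + (G.g {0,2} : ℚ)) ≤ (Nat.card V : ℚ) + 4 := by
    exact_mod_cast t3
  have t2q : 2 * ((G.g {0,1} : ℚ) + (G.g {1,3} : ℚ) + (G.g {0,3} : ℚ)) ≤ (Nat.card V : ℚ) + 4 := by
    exact_mod_cast t2
  have t1q : 2 * ((G.g {0,2} : ℚ) + (G.g {2,3} : ℚ) + (G.g {0,3} : ℚ)) ≤ (Nat.card V : ℚ) + 4 := by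
    exact_mod_cast t1
  have t0q : 2 * ((G.g {1,2} : ℚ) + (G.g {2,3} : ℚ) + (G.g {1,3} : ℚ)) ≤ (Nat.card V : ℚ) + 4 := by
    exact_mod_cast t0
  -- simplify hchi
  simp only [Fin.sum_univ_four] at hchi
  rw [hcr 0, hcr 1, hcr 2, hcr 3] at hchi
  have e : ∀ a b : Fin 4, a ≠ b →
      (if a = b then (0:ℚ) else (G.g {a, b} : ℚ)) = (G.g {a,b} : ℚ) := fun a b hab => if_neg hab
  have d : ∀ a : Fin 4, (if a = a then (0:ℚ) else (G.g {a,a} : ℚ)) = 0 := fun a => if_pos rfl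
  simp only [d, if_true, e 0 1 (by decide), e 0 2 (by decide), e 0 3 (by decide),
    e 1 0 (by decide), e 1 2 (by decide), e 1 3 (by decide), e 2 0 (by decide),
    e 2 1 (by decide), e 2 3 (by decide), e 3 0 (by decide), e 3 1 (by decide),
    e 3 2 (by decide)] at hchi
  rw [Set.pair_comm (1:Fin 4) 0, Set.pair_comm (2:Fin 4) 0, Set.pair_comm (2:Fin 4) 1,
    Set.pair_comm (3:Fin 4) 0, Set.pair_comm (3:Fin 4) 1, Set.pair_comm (3:Fin 4) 2] at hchi
  push_cast at hchi
  -- evaluate the six genera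
  have hρ1 := rho_formula G hconn (cyc4 0 1 2 3)
  rw [show (cyc4 0 1 2 3) 0 = 1 by decide, show (cyc4 0 1 2 3) 1 = 2 by decide,
    show (cyc4 0 1 2 3) 2 = 3 by decide, show (cyc4 0 1 2 3) 3 = 0 by decide,
    Set.pair_comm (3:Fin 4) 0] at hρ1
  have hρ2 := rho_formula G hconn (cyc4 0 3 2 1)
  rw [show (cyc4 0 3 2 1) 0 = 3 by decide, show (cyc4 0 3 2 1) 1 = 0 by decide,
    show (cyc4 0 3 2 1) 2 = 1 by decide, show (cyc4 0 3 2 1) 3 = 2 by decide,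
    Set.pair_comm (1:Fin 4) 0, Set.pair_comm (2:Fin 4) 1, Set.pair_comm (3:Fin 4) 2] at hρ2
  have hρ3 := rho_formula G hconn (cyc4 0 1 3 2)
  rw [show (cyc4 0 1 3 2) 0 = 1 by decide, show (cyc4 0 1 3 2) 1 = 3 by decide,
    show (cyc4 0 1 3 2) 2 = 0 by decide, show (cyc4 0 1 3 2) 3 = 2 by decide,
    Set.pair_comm (2:Fin 4) 0, Set.pair_comm (3:Fin 4) 2] at hρ3
  have hρ4 := rho_formula G hconn (cyc4 0 2 3 1)
  rw [show (cyc4 0 2 3 1) 0 = 2 by decide, show (cyc4 0 2 3 1) 1 = 0 by decide,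
    show (cyc4 0 2 3 1) 2 = 3 by decide, show (cyc4 0 2 3 1) 3 = 1 by decide,
    Set.pair_comm (1:Fin 4) 0, Set.pair_comm (3:Fin 4) 1] at hρ4
  have hρ5 := rho_formula G hconn (cyc4 0 2 1 3)
  rw [show (cyc4 0 2 1 3) 0 = 2 by decide, show (cyc4 0 2 1 3) 1 = 3 by decide,
    show (cyc4 0 2 1 3) 2 = 1 by decide, show (cyc4 0 2 1 3) 3 = 0 by decide,
    Set.pair_comm (2:Fin 4) 1, Set.pair_comm (3:Fin 4) 0] at hρ5
  have hρ6 := rho_formula G hconn (cyc4 0 3 1 2)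
  rw [show (cyc4 0 3 1 2) 0 = 3 by decide, show (cyc4 0 3 1 2) 1 = 2 by decide,
    show (cyc4 0 3 1 2) 2 = 0 by decide, show (cyc4 0 3 1 2) 3 = 1 by decide,
    Set.pair_comm (2:Fin 4) 0, Set.pair_comm (3:Fin 4) 1] at hρ6
  have hω := omega_formula G
  -- generalize all opaque quantities to fresh variables for fast linear arithmetic
  obtain ⟨x01, hx01⟩ : ∃ x : ℚ, (G.g ({0,1} : Set (Fin 4)) : ℚ) = x := ⟨_, rfl⟩
  obtain ⟨x02, hx02⟩ : ∃ x : ℚ, (G.g ({0,2} : Set (Fin 4)) : ℚ) = x := ⟨_, rfl⟩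
  obtain ⟨x03, hx03⟩ : ∃ x : ℚ, (G.g ({0,3} : Set (Fin 4)) : ℚ) = x := ⟨_, rfl⟩
  obtain ⟨x12, hx12⟩ : ∃ x : ℚ, (G.g ({1,2} : Set (Fin 4)) : ℚ) = x := ⟨_, rfl⟩
  obtain ⟨x13, hx13⟩ : ∃ x : ℚ, (G.g ({1,3} : Set (Fin 4)) : ℚ) = x := ⟨_, rfl⟩
  obtain ⟨x23, hx23⟩ : ∃ x : ℚ, (G.g ({2,3} : Set (Fin 4)) : ℚ) = x := ⟨_, rfl⟩
  obtain ⟨r1, hr1⟩ : ∃ x : ℚ, G.rho (cyc4 0 1 2 3) = x := ⟨_, rfl⟩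
  obtain ⟨r2, hr2⟩ : ∃ x : ℚ, G.rho (cyc4 0 3 2 1) = x := ⟨_, rfl⟩
  obtain ⟨r3, hr3⟩ : ∃ x : ℚ, G.rho (cyc4 0 1 3 2) = x := ⟨_, rfl⟩
  obtain ⟨r4, hr4⟩ : ∃ x : ℚ, G.rho (cyc4 0 2 3 1) = x := ⟨_, rfl⟩
  obtain ⟨r5, hr5⟩ : ∃ x : ℚ, G.rho (cyc4 0 2 1 3) = x := ⟨_, rfl⟩
  obtain ⟨r6, hr6⟩ : ∃ x : ℚ, G.rho (cyc4 0 3 1 2) = x := ⟨_, rfl⟩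
  obtain ⟨cV, hcV⟩ : ∃ x : ℚ, (Nat.card V : ℚ) = x := ⟨_, rfl⟩
  obtain ⟨w, hwdef⟩ : ∃ x : ℚ, G.omegaG = x := ⟨_, rfl⟩
  simp only [hx01, hx02, hx03, hx12, hx13, hx23, hr1, hr2, hr3, hr4, hr5, hr6, hcV, hwdef]
    at hchi t3q t2q t1q t0q hρ1 hρ2 hρ3 hρ4 hρ5 hρ6 hω hV
  obtain ⟨⟨σm, hσmc, hσme⟩, hlb⟩ := hrho
  rw [cyclic_iff] at hσmc
  simp only [cycSet, Finset.mem_insert, Finset.mem_singleton] at hσmc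
  have lb1 : ρmin ≤ r1 := hr1 ▸ hlb ⟨_, (cyclic_iff _).mpr (by decide), rfl⟩
  have lb3 : ρmin ≤ r3 := hr3 ▸ hlb ⟨_, (cyclic_iff _).mpr (by decide), rfl⟩
  have lb5 : ρmin ≤ r5 := hr5 ▸ hlb ⟨_, (cyclic_iff _).mpr (by decide), rfl⟩
  have hmin : ρmin = r1 ∨ ρmin = r2 ∨ ρmin = r3 ∨ ρmin = r4 ∨ ρmin = r5 ∨ ρmin = r6 := by
    rcases hσmc with rfl | rfl | rfl | rfl | rfl | rfl
    · rw [hr1] at hσme; exact Or.inl hσme.symm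
    · rw [hr2] at hσme; exact Or.inr (Or.inl hσme.symm)
    · rw [hr3] at hσme; exact Or.inr (Or.inr (Or.inl hσme.symm))
    · rw [hr4] at hσme; exact Or.inr (Or.inr (Or.inr (Or.inl hσme.symm)))
    · rw [hr5] at hσme; exact Or.inr (Or.inr (Or.inr (Or.inr (Or.inl hσme.symm))))
    · rw [hr6] at hσme; exact Or.inr (Or.inr (Or.inr (Or.inr (Or.inr hσme.symm))))
  have key : w = 3 * ρmin →
      (x01 = ((p:ℚ)+2)/3 ∧ x02 = ((p:ℚ)+2)/3 ∧ x03 = ((p:ℚ)+2)/3 ∧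
       x12 = ((p:ℚ)+2)/3 ∧ x13 = ((p:ℚ)+2)/3 ∧ x23 = ((p:ℚ)+2)/3) := by
    intro hEq
    rcases hmin with h | h | h | h | h | h <;>
      exact ⟨by linarith, by linarith, by linarith, by linarith, by linarith, by linarith⟩
  have key2 : (x01 = ((p:ℚ)+2)/3 ∧ x02 = ((p:ℚ)+2)/3 ∧ x03 = ((p:ℚ)+2)/3 ∧
       x12 = ((p:ℚ)+2)/3 ∧ x13 = ((p:ℚ)+2)/3 ∧ x23 = ((p:ℚ)+2)/3) →
      w = 3 * ρmin := by
    rintro ⟨h01, h02, h03, h12, h13, h23⟩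
    rcases hmin with h | h | h | h | h | h <;> linarith
  rw [hwdef]
  constructor
  · intro hEq
    obtain ⟨h01, h02, h03, h12, h13, h23⟩ := key hEq
    intro i j hij
    have hd : ∀ i j : Fin 4, i ≠ j →
        ((i = 0 ∧ j = 1) ∨ (i = 0 ∧ j = 2) ∨ (i = 0 ∧ j = 3) ∨ (i = 1 ∧ j = 0) ∨
         (i = 1 ∧ j = 2) ∨ (i = 1 ∧ j = 3) ∨ (i = 2 ∧ j = 0) ∨ (i = 2 ∧ j = 1) ∨
         (i = 2 ∧ j = 3) ∨ (i = 3 ∧ j = 0) ∨ (i = 3 ∧ j = 1) ∨ (i = 3 ∧ j = 2)) := by decide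
    rcases hd i j hij with ⟨rfl,rfl⟩|⟨rfl,rfl⟩|⟨rfl,rfl⟩|⟨rfl,rfl⟩|⟨rfl,rfl⟩|⟨rfl,rfl⟩|
      ⟨rfl,rfl⟩|⟨rfl,rfl⟩|⟨rfl,rfl⟩|⟨rfl,rfl⟩|⟨rfl,rfl⟩|⟨rfl,rfl⟩
    · rw [hx01]; exact h01
    · rw [hx02]; exact h02
    · rw [hx03]; exact h03
    · rw [Set.pair_comm, hx01]; exact h01
    · rw [hx12]; exact h12
    · rw [hx13]; exact h13
    · rw [Set.pair_comm, hx02]; exact h02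
    · rw [Set.pair_comm, hx12]; exact h12
    · rw [hx23]; exact h23
    · rw [Set.pair_comm, hx03]; exact h03
    · rw [Set.pair_comm, hx13]; exact h13
    · rw [Set.pair_comm, hx23]; exact h23
  · intro hall
    refine key2 ⟨?_, ?_, ?_, ?_, ?_, ?_⟩
    · rw [← hx01]; exact hall 0 1 (by decide)
    · rw [← hx02]; exact hall 0 2 (by decide)
    · rw [← hx03]; exact hall 0 3 (by decide)
    · rw [← hx12]; exact hall 1 2 (by decide)
    · rw [← hx13]; exact hall 1 3 (by decide)
    · rw [← hx23]; exact hall 2 3 (by decide)
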